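/- Let W be an irreducible finite-dimensional gl_N-module. The module T(W,γ,h) is reducible as a 𝒟_0-module if and only if it is reducible as a 𝒱_N-module and h = 0. -/

import Mathlib

noncomputable section

/-- The space `q^γ ℂ[q_1^{±1},…,q_N^{±1}] ⊗ W ⊗ ℂv_h`. -/
abbrev TM (N : ℕ) (W : Type*) [AddCommGroup W] [Module ℂ W] : Type _ :=
  (Fin N → ℤ) →₀ W

/-- The action of `t^r d_a` (`a = 1,…,N`) on the tensor module. -/
noncomputable def tact {N : ℕ} {W : Type*} [AddCommGroup W] [Module ℂ W]
    (ρ : Fin N → Fin N → Module.End ℂ W) (γ : Fin N → ℂ)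
    (r : Fin N → ℤ) (a : Fin N) : Module.End ℂ (TM N W) :=
  Finsupp.lsum ℂ fun μ => (Finsupp.lsingle (μ + r) : W →ₗ[ℂ] TM N W) ∘ₗ
    ((γ a + (μ a : ℂ)) • (LinearMap.id : W →ₗ[ℂ] W) + ∑ p : Fin N, (r p : ℂ) • ρ p a)

/-- The family of operators `ρ p a` is a representation of `gl_N`. -/
def IsGLRep {N : ℕ} {W : Type*} [AddCommGroup W] [Module ℂ W]
    (ρ : Fin N → Fin N → Module.End ℂ W) : Prop :=
  ∀ p a b c, ⁅ρ p a, ρ b c⁆ =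
    (if a = b then ρ p c else 0) - (if c = p then ρ b a else 0)

/-- The shift operator `q^μ ⊗ w ↦ q^{μ+m} ⊗ w` on the tensor module. -/
noncomputable def shOp {N : ℕ} {W : Type*} [AddCommGroup W] [Module ℂ W]
    (m : Fin N → ℤ) : Module.End ℂ (TM N W) :=
  Finsupp.lmapDomain W ℂ (· + m)

/-- The Casimir operator of `sl_N` acting on `W` (with respect to the trace form):
`Σ_{i,j} ρ(Ẽ^{ij}) ρ(Ẽ^{ji})` where `Ẽ^{ij} = E^{ij} − δ_{ij} I/N`. -/
noncomputable def casOp {N : ℕ} {W : Type*} [AddCommGroup W] [Module ℂ W]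
    (ρ : Fin N → Fin N → Module.End ℂ W) : Module.End ℂ W :=
  ∑ i : Fin N, ∑ j : Fin N,
    (ρ i j - if i = j then ((N : ℂ))⁻¹ • ∑ c : Fin N, ρ c c else 0) ∘ₗ
    (ρ j i - if j = i then ((N : ℂ))⁻¹ • ∑ c : Fin N, ρ c c else 0)

section Aux

variable {N : ℕ} {W : Type*} [AddCommGroup W] [Module ℂ W]

/-- `A_a(r) = Σ_p r_p ρ_{pa}`. -/
noncomputable def DD (ρ : Fin N → Fin N → Module.End ℂ W) (a : Fin N) (r : Fin N → ℤ) :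
    Module.End ℂ W := ∑ p, (r p : ℂ) • ρ p a

/-- The operator by which `t^r d_a` acts on the `μ`-component. -/
noncomputable def fE (ρ : Fin N → Fin N → Module.End ℂ W) (γ : Fin N → ℂ)
    (μ r : Fin N → ℤ) (a : Fin N) : Module.End ℂ W :=
  (γ a + (μ a : ℂ)) • 1 + DD ρ a r

lemma DD_add (ρ : Fin N → Fin N → Module.End ℂ W) (a : Fin N) (r s : Fin N → ℤ) :
    DD ρ a (r + s) = DD ρ a r + DD ρ a s := by
  simp [DD, add_smul, Finset.sum_add_distrib]

lemma DD_sub (ρ : Fin N → Fin N → Module.End ℂ W) (a : Fin N) (r s : Fin N → ℤ) :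
    DD ρ a (r - s) = DD ρ a r - DD ρ a s := by
  simp [DD, sub_smul, Finset.sum_sub_distrib]

lemma DD_zero (ρ : Fin N → Fin N → Module.End ℂ W) (a : Fin N) :
    DD ρ a 0 = 0 := by simp [DD]

lemma DD_single (ρ : Fin N → Fin N → Module.End ℂ W) (a p : Fin N) :
    DD ρ a (Pi.single p 1) = ρ p a := by
  simp [DD, Pi.single_apply]

lemma tact_single (ρ : Fin N → Fin N → Module.End ℂ W) (γ : Fin N → ℂ)
    (r : Fin N → ℤ) (a : Fin N) (μ : Fin N → ℤ) (w : W) :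
    tact ρ γ r a (Finsupp.single μ w) = Finsupp.single (μ + r) (fE ρ γ μ r a w) := by
  simp [tact, fE, DD, Finsupp.lsum_single]

lemma shOp_single (m μ : Fin N → ℤ) (w : W) :
    shOp m (Finsupp.single μ w) = Finsupp.single (μ + m) w := by
  simp [shOp, Finsupp.mapDomain_single]

lemma tact_zero_apply (ρ : Fin N → Fin N → Module.End ℂ W) (γ : Fin N → ℂ)
    (a : Fin N) (v : TM N W) (κ : Fin N → ℤ) :
    (tact ρ γ 0 a v) κ = (γ a + (κ a : ℂ)) • v κ := by
  induction v using Finsupp.induction_linear with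
  | zero => simp
  | add f g hf hg => simp [map_add, hf, hg, smul_add]
  | single μ w =>
      have : tact ρ γ 0 a (Finsupp.single μ w) =
          Finsupp.single μ ((γ a + (μ a : ℂ)) • w) := by
        simp [tact, Finsupp.lsum_single]
      rw [this]
      rcases eq_or_ne μ κ with h | h
      · subst h; simp
      · simp [Finsupp.single_apply_eq_zero.2, h, Finsupp.single_eq_of_ne h]

/-- A submodule invariant under the tensor module action is graded. -/
lemma grading (ρ : Fin N → Fin N → Module.End ℂ W) (γ : Fin N → ℂ)
    (P : Submodule ℂ (TM N W)) (hcl : ∀ r a, ∀ v ∈ P, tact ρ γ r a v ∈ P) :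
    ∀ v ∈ P, ∀ μ, Finsupp.single μ (v μ) ∈ P := by
  suffices H : ∀ n : ℕ, ∀ v ∈ P, ∀ μ, (v.support.erase μ).card ≤ n →
      Finsupp.single μ (v μ) ∈ P by
    intro v hv μ; exact H _ v hv μ le_rfl
  intro n
  induction n with
  | zero =>
      intro v hv μ hc
      have hsupp : v.support ⊆ {μ} := by
        intro x hx
        by_contra hxμ
        have : x ∈ v.support.erase μ := Finset.mem_erase.2 ⟨by simpa using hxμ, hx⟩
        simp [Finset.card_eq_zero.1 (Nat.le_zero.1 hc)] at this
      rw [← Finsupp.support_subset_singleton.1 hsupp] at *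
      exact hv
  | succ n ih =>
      intro v hv μ hc
      rcases Nat.lt_or_ge (v.support.erase μ).card (n+1) with hlt | hge
      · exact ih v hv μ (Nat.lt_succ_iff.1 hlt)
      have hne : (v.support.erase μ).Nonempty := by
        rw [← Finset.card_pos]; omega
      obtain ⟨ν, hν⟩ := hne
      have hνμ : ν ≠ μ := (Finset.mem_erase.1 hν).1
      obtain ⟨a, ha⟩ : ∃ a, ν a ≠ μ a := by
        by_contra hcon
        push_neg at hcon
        exact hνμ (funext hcon)
      set v' : TM N W := tact ρ γ 0 a v - (γ a + (ν a : ℂ)) • v with hv'def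
      have hv' : v' ∈ P := P.sub_mem (hcl 0 a v hv) (P.smul_mem _ hv)
      have happ : ∀ κ, v' κ = ((κ a : ℂ) - (ν a : ℂ)) • v κ := by
        intro κ
        simp only [hv'def, Finsupp.sub_apply, Finsupp.smul_apply, tact_zero_apply]
        rw [← sub_smul]
        congr 1
        ring
      have hsub : v'.support ⊆ v.support.erase ν := by
        intro x hx
        rw [Finsupp.mem_support_iff] at hx
        refine Finset.mem_erase.2 ⟨?_, ?_⟩
        · rintro rfl; simp [happ] at hx
        · rw [Finsupp.mem_support_iff]; intro h0; rw [happ, h0, smul_zero] at hx; exact hx rfl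
      have hcard : (v'.support.erase μ).card ≤ n := by
        have h1 : v'.support.erase μ ⊆ (v.support.erase μ).erase ν := by
          intro x hx
          rcases Finset.mem_erase.1 hx with ⟨hxμ, hxs⟩
          rcases Finset.mem_erase.1 (hsub hxs) with ⟨hxν, hxs'⟩
          exact Finset.mem_erase.2 ⟨hxν, Finset.mem_erase.2 ⟨hxμ, hxs'⟩⟩
        calc (v'.support.erase μ).card ≤ ((v.support.erase μ).erase ν).card :=
              Finset.card_le_card h1
          _ = (v.support.erase μ).card - 1 := Finset.card_erase_of_mem hν
          _ ≤ n := by omega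
      have hμ' : Finsupp.single μ (v' μ) ∈ P := ih v' hv' μ hcard
      have hval : v' μ = ((μ a : ℂ) - (ν a : ℂ)) • v μ := happ μ
      have hscal : ((μ a : ℂ) - (ν a : ℂ)) ≠ 0 := by
        rw [sub_ne_zero]
        exact fun hh => ha (by exact_mod_cast hh.symm)
      have := P.smul_mem ((μ a : ℂ) - (ν a : ℂ))⁻¹ hμ'
      rwa [hval, Finsupp.smul_single, smul_smul, inv_mul_cancel₀ hscal, one_smul] at this

lemma transport {ρ : Fin N → Fin N → Module.End ℂ W} {γ : Fin N → ℂ}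
    {P : Submodule ℂ (TM N W)} (hcl : ∀ r a, ∀ v ∈ P, tact ρ γ r a v ∈ P)
    {μ : Fin N → ℤ} {w : W} (hw : Finsupp.single μ w ∈ P) (r : Fin N → ℤ) (a : Fin N) :
    Finsupp.single (μ + r) (fE ρ γ μ r a w) ∈ P := by
  have := hcl r a _ hw
  rwa [tact_single] at this

lemma single_sum'' {ν : Fin N → ℤ} {ι : Type*} (s : Finset ι) (f : ι → W) :
    Finsupp.single ν (∑ i ∈ s, f i) = ∑ i ∈ s, Finsupp.single ν (f i) := by
  exact map_sum (Finsupp.lsingle ν : W →ₗ[ℂ] TM N W) f s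

lemma single_comb {M : Submodule ℂ (TM N W)} {ν : Fin N → ℤ} {x y z t : W}
    (hx : Finsupp.single ν x ∈ M) (hy : Finsupp.single ν y ∈ M)
    (hz : Finsupp.single ν z ∈ M) (ht : Finsupp.single ν t ∈ M) :
    Finsupp.single ν (x - y - z + t) ∈ M := by
  have e : Finsupp.single ν (x - y - z + t)
      = Finsupp.single ν x - Finsupp.single ν y - Finsupp.single ν z + Finsupp.single ν t := by
    ext κ
    simp only [Finsupp.single_apply, Finsupp.add_apply, Finsupp.sub_apply]
    split_ifs <;> simp
  rw [e]
  exact M.add_mem (M.sub_mem (M.sub_mem hx hy) hz) ht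

lemma sd {R : Type*} [Ring R] (L M B1 B2 E1 E2 : R) :
    (L + B1 + B2) * (M + (E1 + E2)) - (L + B1) * (M + E1) - (L + B2) * (M + E2) + L * M
      = B1 * E2 + B2 * E1 := by noncomm_ring

/-- The polarized quadratic part of the two-step composite action. -/
lemma termid (ρ : Fin N → Fin N → Module.End ℂ W) (γ : Fin N → ℂ)
    (μ ν : Fin N → ℤ) (a b : Fin N) :
    fE ρ γ (μ + (Pi.single a 1 + Pi.single b 1)) (ν - μ - (Pi.single a 1 + Pi.single b 1)) a *
        fE ρ γ μ (Pi.single a 1 + Pi.single b 1) b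
      - fE ρ γ (μ + Pi.single a 1) (ν - μ - Pi.single a 1) a * fE ρ γ μ (Pi.single a 1) b
      - fE ρ γ (μ + Pi.single b 1) (ν - μ - Pi.single b 1) a * fE ρ γ μ (Pi.single b 1) b
      + fE ρ γ (μ + 0) (ν - μ - 0) a * fE ρ γ μ 0 b
      = (1 - ρ a a) * ρ b b + ((if a = b then (1 : ℂ) else 0) • 1 - ρ b a) * ρ a b := by
  set L : Module.End ℂ W := (γ a + (μ a : ℂ)) • 1 + DD ρ a (ν - μ) with hL
  set M : Module.End ℂ W := (γ b + (μ b : ℂ)) • 1 with hM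
  have hshape : ∀ s : Fin N → ℤ,
      fE ρ γ (μ + s) (ν - μ - s) a * fE ρ γ μ s b
        = (L + (((s a : ℂ)) • 1 - DD ρ a s)) * (M + DD ρ b s) := by
    intro s
    have h1 : fE ρ γ (μ + s) (ν - μ - s) a = L + (((s a : ℂ)) • 1 - DD ρ a s) := by
      rw [fE, DD_sub, hL]
      have : ((μ + s) a : ℂ) = (μ a : ℂ) + (s a : ℂ) := by push_cast [Pi.add_apply]; ring
      rw [this]
      rw [show γ a + ((μ a : ℂ) + (s a : ℂ)) = (γ a + (μ a : ℂ)) + (s a : ℂ) by ring,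
        add_smul]
      abel
    have h2 : fE ρ γ μ s b = M + DD ρ b s := rfl
    rw [h1, h2]
  simp only [hshape]
  rw [DD_add]
  have hBadd : (((Pi.single a 1 + Pi.single b 1 : Fin N → ℤ) a : ℂ)) • 1
          - (DD ρ a (Pi.single a 1) + DD ρ a (Pi.single b 1))
      = ((((Pi.single a 1 : Fin N → ℤ) a : ℂ)) • 1 - DD ρ a (Pi.single a 1))
        + ((((Pi.single b 1 : Fin N → ℤ) a : ℂ)) • 1 - DD ρ a (Pi.single b 1)) := by
    have : ((Pi.single a 1 + Pi.single b 1 : Fin N → ℤ) a : ℂ)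
        = ((Pi.single a 1 : Fin N → ℤ) a : ℂ) + ((Pi.single b 1 : Fin N → ℤ) a : ℂ) := by
      push_cast [Pi.add_apply]; ring
    rw [this, add_smul]; abel
  rw [hBadd]
  simp only [DD_zero, DD_add, Pi.zero_apply, Int.cast_zero, zero_smul, sub_zero,
    zero_sub, neg_zero, add_zero, sub_self]
  rw [← add_assoc L, sd]
  simp [DD_single, Pi.single_apply, apply_ite (Int.cast : ℤ → ℂ)]

/-- The gl_N Casimir `Σ ρ_{ij} ρ_{ji}` in terms of `Ω` and `α`. -/
lemma Ccas (ρ : Fin N → Fin N → Module.End ℂ W) (α Ω : ℂ) (hNz : (N : ℂ) ≠ 0)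
    (hα : (∑ c : Fin N, ρ c c) = α • 1) (hΩ : casOp ρ = Ω • 1) :
    (∑ i : Fin N, ∑ j : Fin N, ρ i j * ρ j i) = (Ω + α ^ 2 / N) • 1 := by
  set c : ℂ := (N : ℂ)⁻¹ * α with hc
  have key : casOp ρ = (∑ i : Fin N, ∑ j : Fin N, ρ i j * ρ j i)
      - ((2 * c * α - (N : ℂ) * c ^ 2) • 1) := by
    have hterm : ∀ i j : Fin N,
        (ρ i j - if i = j then ((N : ℂ))⁻¹ • ∑ c : Fin N, ρ c c else 0) ∘ₗ
        (ρ j i - if j = i then ((N : ℂ))⁻¹ • ∑ c : Fin N, ρ c c else 0)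
        = ρ i j * ρ j i - (if i = j then (2 * c) • ρ i i - (c ^ 2) • 1 else 0) := by
      intro i j
      rcases eq_or_ne i j with rfl | hij
      · simp only [if_pos rfl, hα, smul_smul, ← hc]
        ext w
        simp [Module.End.mul_apply, smul_sub, sub_smul, smul_smul,
          two_mul, add_smul, map_sub, map_smul]
        module
      · simp [if_neg hij, if_neg (Ne.symm hij), Module.End.mul_eq_comp]
    rw [casOp]
    simp only [hterm]
    have h1 : ∀ i : Fin N, ∑ j : Fin N,
        (ρ i j * ρ j i - (if i = j then (2 * c) • ρ i i - (c ^ 2) • 1 else 0))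
        = (∑ j : Fin N, ρ i j * ρ j i) - ((2 * c) • ρ i i - (c ^ 2) • 1) := by
      intro i
      rw [Finset.sum_sub_distrib, Finset.sum_ite_eq]
      simp
    simp only [h1]
    rw [Finset.sum_sub_distrib]
    congr 1
    rw [Finset.sum_sub_distrib, ← Finset.smul_sum, hα, Finset.sum_const,
      Finset.card_univ, Fintype.card_fin, smul_smul, ← Nat.cast_smul_eq_nsmul ℂ,
      smul_smul, sub_smul]
  have h2 : 2 * c * α - (N : ℂ) * c ^ 2 = α ^ 2 / N := by
    rw [hc]
    field_simp
    ring
  rw [hΩ, h2] at key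
  rw [add_smul, key]
  abel

/-- Summing the polarized quadratic parts gives the key scalar. -/
lemma sumid (ρ : Fin N → Fin N → Module.End ℂ W) (α Ω : ℂ)
    (hα : (∑ c : Fin N, ρ c c) = α • 1)
    (hC : (∑ i : Fin N, ∑ j : Fin N, ρ i j * ρ j i) = (Ω + α ^ 2 / N) • 1) :
    ∑ a : Fin N, ∑ b : Fin N,
      ((1 - ρ a a) * ρ b b + ((if a = b then (1 : ℂ) else 0) • 1 - ρ b a) * ρ a b)
    = ((N : ℂ) * α - α ^ 2 + α - Ω - α ^ 2 / N) • 1 := by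
  have hsplit : ∀ a b : Fin N,
      ((1 - ρ a a) * ρ b b + ((if a = b then (1 : ℂ) else 0) • 1 - ρ b a) * ρ a b)
      = (1 - ρ a a) * ρ b b + (if a = b then ρ a b else 0) - ρ b a * ρ a b := by
    intro a b
    rcases eq_or_ne a b with rfl | hab
    · simp [sub_mul]; abel
    · simp [if_neg hab, sub_mul]; abel
  simp only [hsplit]
  rw [Finset.sum_congr rfl (fun a _ => Finset.sum_sub_distrib ..),
    Finset.sum_sub_distrib,
    Finset.sum_congr rfl (fun a _ => Finset.sum_add_distrib ..),
    Finset.sum_add_distrib]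
  have h1 : (∑ a : Fin N, ∑ b : Fin N, (1 - ρ a a) * ρ b b)
      = (((N : ℂ) * α - α ^ 2) • 1 : Module.End ℂ W) := by
    rw [← Finset.sum_mul_sum]
    rw [Finset.sum_sub_distrib, Finset.sum_const, Finset.card_univ, Fintype.card_fin, hα]
    rw [sub_mul, smul_mul_assoc, smul_mul_assoc, one_mul, smul_smul]
    rw [← Nat.cast_smul_eq_nsmul ℂ, smul_smul, sub_smul]
    ring_nf
  have h2 : (∑ a : Fin N, ∑ b : Fin N, (if a = b then ρ a b else 0))
      = (α • 1 : Module.End ℂ W) := by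
    rw [← hα]
    refine Finset.sum_congr rfl fun a _ => ?_
    simp
  have h3 : (∑ a : Fin N, ∑ b : Fin N, ρ b a * ρ a b)
      = ((Ω + α ^ 2 / N) • 1 : Module.End ℂ W) := by
    rw [Finset.sum_comm]
    exact hC
  rw [h1, h2, h3]
  module

end Aux
/-- let `W` be an irreducible finite-dimensional `gl_N`-module (with the
identity matrix acting by `α` and the Casimir operator of `sl_N` by `Ω`).  The module
`T(W,γ,h)` — on which `t^r d_a` (`a = 1,…,N`) acts by the tensor module action and
`t^r d_0` acts by `β`-shifts, `β = −h − Ω/(2(N+1)) − α(α−N)/(2N)` — is reducible as a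
`𝒟_0`-module if and only if it is reducible as a `𝒱_N`-module and `h = 0`. -/
theorem stmt11 {N : ℕ} (hN : 1 ≤ N) {W : Type*} [AddCommGroup W] [Module ℂ W]
    [FiniteDimensional ℂ W] [Nontrivial W]
    (ρ : Fin N → Fin N → Module.End ℂ W) (hρ : IsGLRep ρ)
    (hirr : ∀ P : Submodule ℂ W, (∀ p a, ∀ w ∈ P, ρ p a w ∈ P) → P = ⊥ ∨ P = ⊤)
    (γ : Fin N → ℂ) (h α Ω : ℂ)
    (hα : (∑ c : Fin N, ρ c c) = α • 1)
    (hΩ : casOp ρ = Ω • 1) :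
    (∃ P : Submodule ℂ (TM N W), P ≠ ⊥ ∧ P ≠ ⊤ ∧
        (∀ r a, ∀ v ∈ P, tact ρ γ r a v ∈ P) ∧
        (∀ r : Fin N → ℤ, ∀ v ∈ P,
          ((-h - Ω / (2 * (N + 1)) - α * (α - N) / (2 * N)) • shOp r) v ∈ P)) ↔
      ((∃ P : Submodule ℂ (TM N W), P ≠ ⊥ ∧ P ≠ ⊤ ∧
        ∀ r a, ∀ v ∈ P, tact ρ γ r a v ∈ P) ∧ h = 0) := by
  classical
  have hN0 : (N : ℂ) ≠ 0 := Nat.cast_ne_zero.2 (by omega)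
  have hN1 : ((N : ℂ) + 1) ≠ 0 := by
    have : ((N : ℂ) + 1) = ((N + 1 : ℕ) : ℂ) := by push_cast; ring
    rw [this]
    exact Nat.cast_ne_zero.2 (by omega)
  set S : ℂ := (N : ℂ) * α - α ^ 2 + α - Ω - α ^ 2 / N with hSdef
  have hCc := Ccas ρ α Ω hN0 hα hΩ
  have hbig := sumid ρ α Ω hα hCc
  -- no proper nonzero tact-invariant submodule allows full single-transport
  have core : ∀ P : Submodule ℂ (TM N W), P ≠ ⊥ → P ≠ ⊤ →
      (∀ r a, ∀ v ∈ P, tact ρ γ r a v ∈ P) →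
      (∀ (μ ν : Fin N → ℤ) (w : W), Finsupp.single μ w ∈ P → Finsupp.single ν w ∈ P) →
      False := by
    intro P hb ht hcl hall
    obtain ⟨v, hv, hv0⟩ := Submodule.exists_mem_ne_zero_of_ne_bot hb
    obtain ⟨μ₁, hμ₁⟩ : ∃ μ, v μ ≠ 0 := by
      by_contra hcon
      push_neg at hcon
      exact hv0 (Finsupp.ext fun μ => hcon μ)
    have hw1 : Finsupp.single μ₁ (v μ₁) ∈ P := grading ρ γ P hcl v hv μ₁
    set U : Submodule ℂ W := P.comap (Finsupp.lsingle 0) with hU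
    have hmemU : ∀ w : W, w ∈ U ↔ Finsupp.single (0 : Fin N → ℤ) w ∈ P := by
      intro w
      simp [hU, Submodule.mem_comap, Finsupp.lsingle_apply]
    have hUinv : ∀ p a, ∀ w ∈ U, ρ p a w ∈ U := by
      intro p a w hw
      have h1 : Finsupp.single ((0 : Fin N → ℤ) + Pi.single p 1)
          (fE ρ γ 0 (Pi.single p 1) a w) ∈ P :=
        transport hcl ((hmemU w).1 hw) (Pi.single p 1) a
      have h2 : Finsupp.single (0 : Fin N → ℤ)
          (fE ρ γ 0 (Pi.single p 1) a w) ∈ P := hall _ _ _ h1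
      have h3 : fE ρ γ 0 (Pi.single p 1) a w = (γ a) • w + ρ p a w := by
        simp [fE, DD_single]
      rw [h3] at h2
      rw [hmemU]
      have h4 := P.sub_mem h2 (P.smul_mem (γ a) ((hmemU w).1 hw))
      rw [show Finsupp.single (0 : Fin N → ℤ) ((γ a) • w + ρ p a w)
          - (γ a) • Finsupp.single (0 : Fin N → ℤ) w
          = Finsupp.single (0 : Fin N → ℤ) (ρ p a w) by
        rw [Finsupp.smul_single, ← Finsupp.single_sub]; congr 1; abel] at h4
      exact h4
    rcases hirr U hUinv with hUb | hUt
    · have : v μ₁ ∈ U := (hmemU _).2 (hall _ _ _ hw1)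
      rw [hUb] at this
      exact hμ₁ this
    · apply ht
      rw [Submodule.eq_top_iff']
      intro x
      rw [← Finsupp.sum_single x]
      refine Submodule.sum_mem P fun μ _ => ?_
      refine hall 0 μ _ ?_
      exact (hmemU _).1 (hUt ▸ Submodule.mem_top)
  -- tact-invariance of a proper nonzero submodule forces S = 0
  have hK : ∀ P : Submodule ℂ (TM N W), P ≠ ⊥ → P ≠ ⊤ →
      (∀ r a, ∀ v ∈ P, tact ρ γ r a v ∈ P) → S = 0 := by
    intro P hb ht hcl
    by_contra hS0
    refine core P hb ht hcl fun μ ν w hw => ?_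
    have step : ∀ (s : Fin N → ℤ) (a b : Fin N),
        Finsupp.single ν ((fE ρ γ (μ + s) (ν - μ - s) a * fE ρ γ μ s b) w) ∈ P := by
      intro s a b
      have h1 := transport hcl hw s b
      have h2 := transport hcl h1 (ν - μ - s) a
      have hidx : (μ + s) + (ν - μ - s) = ν := by abel
      rw [hidx] at h2
      simpa [Module.End.mul_apply] using h2
    have hop : Finsupp.single ν
        ((∑ a : Fin N, ∑ b : Fin N,
          ((1 - ρ a a) * ρ b b + ((if a = b then (1 : ℂ) else 0) • 1 - ρ b a) * ρ a b)) w)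
        ∈ P := by
      have hab : ∀ a b : Fin N, Finsupp.single ν
          (((1 - ρ a a) * ρ b b + ((if a = b then (1 : ℂ) else 0) • 1 - ρ b a) * ρ a b) w)
          ∈ P := by
        intro a b
        rw [← termid ρ γ μ ν a b]
        simp only [LinearMap.sub_apply, LinearMap.add_apply]
        exact single_comb (step _ a b) (step _ a b) (step _ a b) (step 0 a b)
      rw [LinearMap.sum_apply, single_sum'']
      refine Submodule.sum_mem P fun a _ => ?_
      rw [LinearMap.sum_apply, single_sum'']
      exact Submodule.sum_mem P fun b _ => hab a b
    rw [hbig] at hop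
    have hop2 : Finsupp.single ν (S • w) ∈ P := by
      simpa [hSdef] using hop
    have := P.smul_mem S⁻¹ hop2
    rwa [Finsupp.smul_single, smul_smul, inv_mul_cancel₀ hS0, one_smul] at this
  have hβeq : (-h - Ω / (2 * ((N : ℂ) + 1)) - α * (α - (N : ℂ)) / (2 * (N : ℂ)))
      = -h + S / (2 * ((N : ℂ) + 1)) := by
    rw [hSdef]
    field_simp
    ring
  constructor
  · rintro ⟨P, hb, ht, hcl, hsh⟩
    have hS0 : S = 0 := hK P hb ht hcl
    have hβ : (-h - Ω / (2 * ((N : ℂ) + 1)) - α * (α - (N : ℂ)) / (2 * (N : ℂ))) = -h := by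
      rw [hβeq, hS0]; ring
    refine ⟨⟨P, hb, ht, hcl⟩, ?_⟩
    by_contra hh
    refine core P hb ht hcl fun μ ν w hw => ?_
    have h1 := hsh (ν - μ) _ hw
    rw [hβ] at h1
    rw [LinearMap.smul_apply, shOp_single] at h1
    have h2 := P.smul_mem (-h)⁻¹ h1
    rw [smul_smul, inv_mul_cancel₀ (neg_ne_zero.2 hh), one_smul] at h2
    rwa [show μ + (ν - μ) = ν by abel] at h2
  · rintro ⟨⟨P, hb, ht, hcl⟩, hh⟩
    have hS0 : S = 0 := hK P hb ht hcl
    refine ⟨P, hb, ht, hcl, ?_⟩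
    intro r v hv
    have hβ : (-h - Ω / (2 * ((N : ℂ) + 1)) - α * (α - (N : ℂ)) / (2 * (N : ℂ))) = 0 := by
      rw [hβeq, hS0, hh]; ring
    rw [hβ, zero_smul, LinearMap.zero_apply]
    exact P.zero_mem


end
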